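/- Let π₁, π₂ be *-representations of quasi *-algebras (𝔄, 𝔄₀), (𝔅, 𝔅₀) on domains D_{π₁} ⊂ H_{π₁}, D_{π₂} ⊂ H_{π₂}. Then there is a unique *-representation π = π₁ ⊗ π₂ of the tensor product quasi *-algebra (𝔄 ⊗ 𝔅, 𝔄₀ ⊗ 𝔅₀) on D_{π₁} ⊗ D_{π₂} ⊂ H_{π₁} ⊗̂ H_{π₂} defined by π(Σᵢ aᵢ ⊗ bᵢ) = Σᵢ π₁(aᵢ) ⊗ π₂(bᵢ); in particular π(c*) = (π(c))† for all c ∈ 𝔄 ⊗ 𝔅 and π(cz) = π(c) □ π(z) for all c ∈ 𝔄 ⊗ 𝔅, z ∈ 𝔄₀ ⊗ 𝔅₀. -/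

import Mathlib

open scoped TensorProduct

/-- Let `π₁, π₂` be *-representations of the quasi *-algebras `(𝔄, 𝔄₀)`,
`(𝔅, 𝔅₀)` on dense domains `D₁ ⊂ H₁`, `D₂ ⊂ H₂`. Then there is a unique *-representation
`π = π₁ ⊗ π₂` of the tensor product quasi *-algebra `(𝔄 ⊗ 𝔅, 𝔄₀ ⊗ 𝔅₀)` on
`D₁ ⊗ D₂ ⊂ H₁ ⊗̂ H₂` with `π(Σᵢ aᵢ ⊗ bᵢ) = Σᵢ π₁(aᵢ) ⊗ π₂(bᵢ)`; moreover `π(c*) = π(c)†`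
and `π(cz) = π(c) □ π(z)` for all `c ∈ 𝔄 ⊗ 𝔅`, `z ∈ 𝔄₀ ⊗ 𝔅₀` (expressed through the
matrix elements relative to the tensor product inner product `ip`). -/
theorem stmt12
    (H₁ H₂ : Type*)
    [NormedAddCommGroup H₁] [InnerProductSpace ℂ H₁] [CompleteSpace H₁]
    [NormedAddCommGroup H₂] [InnerProductSpace ℂ H₂] [CompleteSpace H₂]
    (D₁ : Submodule ℂ H₁) (D₂ : Submodule ℂ H₂)
    (hD₁ : Dense (D₁ : Set H₁)) (hD₂ : Dense (D₂ : Set H₂))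
    (A A₀ B B₀ : Type*)
    [AddCommGroup A] [Module ℂ A] [StarAddMonoid A] [StarModule ℂ A]
    [AddCommGroup B] [Module ℂ B] [StarAddMonoid B] [StarModule ℂ B]
    [Ring A₀] [Algebra ℂ A₀] [StarRing A₀] [StarModule ℂ A₀]
    [Ring B₀] [Algebra ℂ B₀] [StarRing B₀] [StarModule ℂ B₀]
    (ιA : A₀ →ₗ[ℂ] A) (ιB : B₀ →ₗ[ℂ] B)
    (lA rA : A₀ →ₗ[ℂ] A →ₗ[ℂ] A) (lB rB : B₀ →ₗ[ℂ] B →ₗ[ℂ] B)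
    -- the *-representations π₁ and π₂ (with the *-representation axioms in matrix-element form)
    (π₁ : A →ₗ[ℂ] (D₁ →ₗ[ℂ] H₁)) (π₂ : B →ₗ[ℂ] (D₂ →ₗ[ℂ] H₂))
    (hπ₁star : ∀ (a : A) (ξ η : D₁),
      (inner ℂ (π₁ a ξ) (η : H₁) : ℂ) = inner ℂ (ξ : H₁) (π₁ (star a) η))
    (hπ₁mult : ∀ (a : A) (x : A₀) (ξ η : D₁),
      (inner ℂ (π₁ (rA x a) ξ) (η : H₁) : ℂ) = inner ℂ (π₁ (ιA x) ξ) (π₁ (star a) η))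
    (hπ₂star : ∀ (b : B) (ξ η : D₂),
      (inner ℂ (π₂ b ξ) (η : H₂) : ℂ) = inner ℂ (ξ : H₂) (π₂ (star b) η))
    (hπ₂mult : ∀ (b : B) (y : B₀) (ξ η : D₂),
      (inner ℂ (π₂ (rB y b) ξ) (η : H₂) : ℂ) = inner ℂ (π₂ (ιB y) ξ) (π₂ (star b) η))
    -- the right action of 𝔄₀ ⊗ 𝔅₀ and the involution of 𝔄 ⊗ 𝔅
    (R : TensorProduct ℂ A₀ B₀ →ₗ[ℂ] TensorProduct ℂ A B →ₗ[ℂ] TensorProduct ℂ A B)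
    (hR : ∀ (x : A₀) (y : B₀) (a : A) (b : B),
      R (x ⊗ₜ[ℂ] y) (a ⊗ₜ[ℂ] b) = rA x a ⊗ₜ[ℂ] rB y b)
    (S : TensorProduct ℂ A B → TensorProduct ℂ A B)
    (hS : ∀ (a : A) (b : B), S (a ⊗ₜ[ℂ] b) = star a ⊗ₜ[ℂ] star b)
    (hSadd : ∀ u v, S (u + v) = S u + S v)
    -- the inner product of the Hilbert space tensor product H₁ ⊗̂ H₂
    (ip : TensorProduct ℂ H₁ H₂ → TensorProduct ℂ H₁ H₂ → ℂ)
    (hip : ∀ (u₁ u₂ : H₁) (v₁ v₂ : H₂),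
      ip (u₁ ⊗ₜ[ℂ] v₁) (u₂ ⊗ₜ[ℂ] v₂) = (inner ℂ u₁ u₂ : ℂ) * (inner ℂ v₁ v₂ : ℂ))
    (hipaddl : ∀ u v w, ip (u + v) w = ip u w + ip v w)
    (hipaddr : ∀ u v w, ip u (v + w) = ip u v + ip u w)
    (hipsmull : ∀ (z : ℂ) u w, ip (z • u) w = starRingEnd ℂ z * ip u w)
    (hipsmulr : ∀ (z : ℂ) u w, ip u (z • w) = z * ip u w) :
    -- π := π₁ ⊗ π₂
    letI π : TensorProduct ℂ A B →ₗ[ℂ]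
        (TensorProduct ℂ D₁ D₂ →ₗ[ℂ] TensorProduct ℂ H₁ H₂) :=
      TensorProduct.lift ((TensorProduct.mapBilinear (σ₁₂ := RingHom.id ℂ) (M := D₁) (N := D₂) (M₂ := H₁) (N₂ := H₂)).compl₁₂ π₁ π₂)
    letI inc : TensorProduct ℂ D₁ D₂ →ₗ[ℂ] TensorProduct ℂ H₁ H₂ :=
      TensorProduct.map D₁.subtype D₂.subtype
    -- π(a ⊗ b)(ξ ⊗ η) = π₁(a)ξ ⊗ π₂(b)η
    ((∀ (a : A) (b : B) (ξ : D₁) (η : D₂),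
        π (a ⊗ₜ[ℂ] b) (ξ ⊗ₜ[ℂ] η) = π₁ a ξ ⊗ₜ[ℂ] π₂ b η) ∧
    -- uniqueness
    (∀ π' : TensorProduct ℂ A B →ₗ[ℂ]
        (TensorProduct ℂ D₁ D₂ →ₗ[ℂ] TensorProduct ℂ H₁ H₂),
      (∀ (a : A) (b : B) (ξ : D₁) (η : D₂),
        π' (a ⊗ₜ[ℂ] b) (ξ ⊗ₜ[ℂ] η) = π₁ a ξ ⊗ₜ[ℂ] π₂ b η) → π' = π) ∧
    -- π(c*) = π(c)†
    (∀ (c : TensorProduct ℂ A B) (Ξ Θ : TensorProduct ℂ D₁ D₂),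
      ip (π c Ξ) (inc Θ) = ip (inc Ξ) (π (S c) Θ)) ∧
    -- π(cz) = π(c) □ π(z)
    (∀ (c : TensorProduct ℂ A B) (z : TensorProduct ℂ A₀ B₀)
        (Ξ Θ : TensorProduct ℂ D₁ D₂),
      ip (π (R z c) Ξ) (inc Θ)
        = ip (π (TensorProduct.map ιA ιB z) Ξ) (π (S c) Θ))) := by

  set π : TensorProduct ℂ A B →ₗ[ℂ]
      (TensorProduct ℂ D₁ D₂ →ₗ[ℂ] TensorProduct ℂ H₁ H₂) :=
    TensorProduct.lift ((TensorProduct.mapBilinear (σ₁₂ := RingHom.id ℂ) (M := D₁) (N := D₂) (M₂ := H₁) (N₂ := H₂)).compl₁₂ π₁ π₂) with hπdef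
  set inc : TensorProduct ℂ D₁ D₂ →ₗ[ℂ] TensorProduct ℂ H₁ H₂ :=
    TensorProduct.map D₁.subtype D₂.subtype with hincdef
  have hπ : ∀ (a : A) (b : B) (ξ : D₁) (η : D₂),
      π (a ⊗ₜ[ℂ] b) (ξ ⊗ₜ[ℂ] η) = π₁ a ξ ⊗ₜ[ℂ] π₂ b η := by
    intro a b ξ η
    rw [hπdef]
    simp [TensorProduct.lift.tmul, LinearMap.compl₁₂_apply,
      TensorProduct.mapBilinear_apply, TensorProduct.map_tmul]
  have hinc : ∀ (ξ : D₁) (η : D₂), inc (ξ ⊗ₜ[ℂ] η) = (ξ : H₁) ⊗ₜ[ℂ] (η : H₂) := by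
    intro ξ η; rw [hincdef]; simp [TensorProduct.map_tmul]
  have ipzl : ∀ w, ip 0 w = 0 := by
    intro w
    have h := hipaddl 0 0 w
    rw [add_zero] at h
    exact (left_eq_add.mp h)
  have ipzr : ∀ w, ip w 0 = 0 := by
    intro w
    have h := hipaddr w 0 0
    rw [add_zero] at h
    exact (left_eq_add.mp h)
  have hS0 : S 0 = 0 := by
    have h := hSadd 0 0
    rw [add_zero] at h
    exact (left_eq_add.mp h)
  -- key extension lemma over Ξ and Θ
  have key : ∀ (T T' U U' : TensorProduct ℂ D₁ D₂ →ₗ[ℂ] TensorProduct ℂ H₁ H₂),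
      (∀ (ξ : D₁) (η : D₂) (ξ' : D₁) (η' : D₂),
        ip (T (ξ ⊗ₜ[ℂ] η)) (T' (ξ' ⊗ₜ[ℂ] η')) = ip (U (ξ ⊗ₜ[ℂ] η)) (U' (ξ' ⊗ₜ[ℂ] η'))) →
      ∀ Ξ Θ, ip (T Ξ) (T' Θ) = ip (U Ξ) (U' Θ) := by
    intro T T' U U' h Ξ Θ
    induction Ξ using TensorProduct.induction_on with
    | zero => simp [ipzl]
    | tmul ξ η =>
      induction Θ using TensorProduct.induction_on with
      | zero => simp [ipzr]
      | tmul ξ' η' => exact h ξ η ξ' η'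
      | add Θ₁ Θ₂ ih1 ih2 => rw [map_add, map_add, hipaddr, hipaddr, ih1, ih2]
    | add Ξ₁ Ξ₂ ih1 ih2 => rw [map_add, map_add, hipaddl, hipaddl, ih1, ih2]
  refine ⟨hπ, ?_, ?_, ?_⟩
  · intro π' hπ'
    apply TensorProduct.ext'
    intro a b
    apply TensorProduct.ext'
    intro ξ η
    rw [hπ' a b ξ η, hπ a b ξ η]
  · intro c
    induction c using TensorProduct.induction_on with
    | zero => intro Ξ Θ; simp [hS0, ipzl, ipzr]
    | tmul a b =>
      intro Ξ Θ
      rw [hS a b]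
      refine key (π (a ⊗ₜ[ℂ] b)) inc inc (π (star a ⊗ₜ[ℂ] star b)) ?_ Ξ Θ
      intro ξ η ξ' η'
      rw [hπ, hπ, hinc, hinc, hip, hip, hπ₁star, hπ₂star]
    | add c₁ c₂ ih1 ih2 =>
      intro Ξ Θ
      rw [hSadd, map_add, map_add, LinearMap.add_apply, LinearMap.add_apply,
        hipaddl, hipaddr, ih1 Ξ Θ, ih2 Ξ Θ]
  · intro c z
    induction z using TensorProduct.induction_on with
    | zero => intro Ξ Θ; simp [ipzl]
    | tmul x y =>
      induction c using TensorProduct.induction_on with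
      | zero => intro Ξ Θ; simp [hS0, ipzl, ipzr]
      | tmul a b =>
        intro Ξ Θ
        rw [hR x y a b, hS a b, TensorProduct.map_tmul]
        refine key (π (rA x a ⊗ₜ[ℂ] rB y b)) inc (π (ιA x ⊗ₜ[ℂ] ιB y))
          (π (star a ⊗ₜ[ℂ] star b)) ?_ Ξ Θ
        intro ξ η ξ' η'
        rw [hπ, hπ, hπ, hinc, hip, hip, hπ₁mult, hπ₂mult]
      | add c₁ c₂ ih1 ih2 =>
        intro Ξ Θ
        rw [hSadd, map_add, map_add, map_add, LinearMap.add_apply, LinearMap.add_apply,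
          hipaddl, hipaddr, ih1 Ξ Θ, ih2 Ξ Θ]
    | add z₁ z₂ ih1 ih2 =>
      intro Ξ Θ
      simp only [map_add, LinearMap.add_apply, hipaddl, ih1 Ξ Θ, ih2 Ξ Θ]
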